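/- Let f : ℤ_p → ℤ_p be a polynomial with p-adic integer coefficients in one variable. Then f preserves the Haar measure on ℤ_p if and only if f is bijective modulo p and the derivative f'(u) is nonzero modulo p for all u ∈ {0, 1, ..., p-1}. -/

import Mathlib

variable {p : ℕ} [Fact p.Prime]

/-- `f` is bijective modulo `p^k`: it induces a bijection of `ZMod (p^k)`. -/
def BijectiveMod {p : ℕ} [Fact p.Prime] (f : ℤ_[p] → ℤ_[p]) (k : ℕ) : Prop :=
  ∃ g : ZMod (p ^ k) → ZMod (p ^ k),
    (∀ x : ℤ_[p], g (PadicInt.toZModPow k x) = PadicInt.toZModPow k (f x)) ∧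
    Function.Bijective g

lemma toZModPow_surj (k : ℕ) : Function.Surjective (PadicInt.toZModPow k : ℤ_[p] → ZMod (p^k)) := by
  intro z
  haveI : NeZero (p ^ k) := ⟨pow_ne_zero k (Fact.out : p.Prime).ne_zero⟩
  exact ⟨(z.val : ℤ_[p]), by rw [map_natCast, ZMod.natCast_zmod_val]⟩

lemma toZModPow_eq_iff (k : ℕ) (x y : ℤ_[p]) :
    PadicInt.toZModPow k x = PadicInt.toZModPow k y ↔ (p:ℤ_[p])^k ∣ x - y := by
  rw [← sub_eq_zero, ← map_sub, ← RingHom.mem_ker, PadicInt.ker_toZModPow,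
    Ideal.mem_span_singleton]

lemma key_step (f : Polynomial ℤ_[p])
    (hd : ∀ u : ℤ_[p], ¬ (p : ℤ_[p]) ∣ f.derivative.eval u)
    (h1 : BijectiveMod (fun x => f.eval x) 1) :
    ∀ k : ℕ, 1 ≤ k → ∀ y : ℤ_[p], ∃ x, (p:ℤ_[p])^k ∣ f.eval x - y := by
  intro k hk
  induction k with
  | zero => omega
  | succ k ih =>
    rcases Nat.eq_or_lt_of_le hk with h | h
    · -- k + 1 = 1, base case
      intro y
      obtain ⟨g, hg, hbij⟩ := h1
      obtain ⟨z, hz⟩ := hbij.2 (PadicInt.toZModPow 1 y)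
      obtain ⟨x, rfl⟩ := toZModPow_surj 1 z
      rw [hg] at hz
      have h1eq : k + 1 = 1 := h.symm
      rw [h1eq]
      exact ⟨x, (toZModPow_eq_iff 1 (f.eval x) y).mp hz⟩
    · -- k ≥ 1
      have hk1 : 1 ≤ k := by omega
      intro y
      obtain ⟨x, c, hc⟩ := ih hk1 y
      have hu : IsUnit (f.derivative.eval x) := by
        rw [PadicInt.isUnit_iff]
        refine le_antisymm (PadicInt.norm_le_one _) ?_
        by_contra hlt
        push_neg at hlt
        exact hd x ((PadicInt.norm_lt_one_iff_dvd _).mp hlt)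
      obtain ⟨w, hw⟩ := isUnit_iff_exists_inv.mp hu
      set t : ℤ_[p] := -(c * w) with ht
      obtain ⟨d, hbe⟩ := f.binomExpansion x ((p:ℤ_[p])^k * t)
      refine ⟨x + (p:ℤ_[p])^k * t, ?_⟩
      have h2 : f.derivative.eval x * ((p:ℤ_[p])^k * t) = -((p:ℤ_[p])^k * c) := by
        have e1 : f.derivative.eval x * ((p:ℤ_[p])^k * t)
            = -((p:ℤ_[p])^k * c * (f.derivative.eval x * w)) := by rw [ht]; ring
        rw [e1, hw, mul_one]
      have heq : f.eval (x + (p:ℤ_[p])^k * t) - y = d * ((p:ℤ_[p])^k)^2 * t^2 := by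
        calc f.eval (x + (p:ℤ_[p])^k * t) - y
            = (f.eval x - y) + f.derivative.eval x * ((p:ℤ_[p])^k * t)
              + d * ((p:ℤ_[p])^k)^2 * t^2 := by rw [hbe]; ring
          _ = (p:ℤ_[p])^k * c + -((p:ℤ_[p])^k * c) + d * ((p:ℤ_[p])^k)^2 * t^2 := by
              rw [hc, h2]
          _ = d * ((p:ℤ_[p])^k)^2 * t^2 := by ring
      rw [heq]
      have hdvd2 : (p:ℤ_[p])^(k+1) ∣ ((p:ℤ_[p])^k)^2 := by
        rw [← pow_mul]
        exact pow_dvd_pow _ (by omega)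
      exact (hdvd2.mul_left d).mul_right (t^2)

theorem stmt10 {p : ℕ} [Fact p.Prime] (f : Polynomial ℤ_[p]) :
    (∀ k : ℕ, 1 ≤ k → BijectiveMod (fun x => f.eval x) k) ↔
      (BijectiveMod (fun x => f.eval x) 1 ∧
        ∀ u : ℤ_[p], ¬ (p : ℤ_[p]) ∣ f.derivative.eval u) := by
  constructor
  · intro H
    refine ⟨H 1 le_rfl, fun u hdvd => ?_⟩
    obtain ⟨g, hg, hbij⟩ := H 2 (by norm_num)
    have h1 : g (PadicInt.toZModPow 2 (u + (p:ℤ_[p]))) = g (PadicInt.toZModPow 2 u) := by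
      rw [hg, hg]
      apply (toZModPow_eq_iff 2 _ _).mpr
      show (p:ℤ_[p])^2 ∣ f.eval (u + (p:ℤ_[p])) - f.eval u
      obtain ⟨d, hbe⟩ := f.binomExpansion u (p : ℤ_[p])
      obtain ⟨e, he⟩ := hdvd
      have : f.eval (u + (p:ℤ_[p])) - f.eval u = (p:ℤ_[p])^2 * (e + d) := by
        rw [hbe, he]; ring
      rw [this]
      exact Dvd.intro _ rfl
    have h2 := hbij.1 h1
    rw [toZModPow_eq_iff] at h2
    have h3 : (p:ℤ_[p])^2 ∣ (p:ℤ_[p]) := by simpa using h2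
    obtain ⟨e, he⟩ := h3
    have hp0 : (p:ℤ_[p]) ≠ 0 := by
      exact_mod_cast Nat.cast_ne_zero.mpr (Fact.out : p.Prime).ne_zero
    have h4 : (1 : ℤ_[p]) = p * e := by
      apply mul_left_cancel₀ hp0
      rw [mul_one, ← mul_assoc, ← pow_two]
      exact he
    have h5 : IsUnit (p : ℤ_[p]) := isUnit_iff_exists_inv.mpr ⟨e, h4.symm⟩
    rw [PadicInt.isUnit_iff, PadicInt.norm_p] at h5
    have hp2 : (2:ℝ) ≤ p := by exact_mod_cast (Fact.out : p.Prime).two_le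
    have h6 : ((p:ℝ))⁻¹ < 1 := by
      rw [inv_lt_one_iff₀]; right; linarith
    linarith [h5, h6]
  · rintro ⟨h1, hd⟩ k hk
    haveI : NeZero (p ^ k) := ⟨pow_ne_zero k (Fact.out : p.Prime).ne_zero⟩
    refine ⟨fun z => (f.map (PadicInt.toZModPow k)).eval z, fun x => ?_, ?_⟩
    · simp only [Polynomial.eval_map, Polynomial.eval₂_hom]
    · rw [← Finite.surjective_iff_bijective]
      intro z
      obtain ⟨y, rfl⟩ := toZModPow_surj k z
      obtain ⟨x, hx⟩ := key_step f hd h1 k hk y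
      refine ⟨PadicInt.toZModPow k x, ?_⟩
      simp only [Polynomial.eval_map, Polynomial.eval₂_hom]
      exact (toZModPow_eq_iff k _ _).mpr hx
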